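/- arXiv:1706.06963 — 4 statements merged into one kernel-verified Lean document; each statement's English description precedes it below -/
import Mathlib

section
/- With ε_K = (N+2)/(N+1+d) and ε_M = 2/(d+1), the knowledge gain satisfies ε_K − ε_M > ((d−1)/(d+1)) · (N/(N+2)) · (1/(d·ε_S)) where ε_S = 1/(N+1) + N/(d(N+1)), for all integers N ≥ 1, d ≥ 2. -/
/-- With `ε_K = (N+2)/(N+1+d)`, `ε_M = 2/(d+1)` and
`ε_S = 1/(N+1) + N/(d(N+1))`, the knowledge gain satisfies
`ε_K − ε_M > ((d−1)/(d+1))·(N/(N+2))·(1/(d·ε_S))` for integers `N ≥ 1`, `d ≥ 2`. -/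
theorem knowledge_gain_bound
    (N d : ℕ) (hN : 1 ≤ N) (hd : 2 ≤ d) :
    ((d : ℝ) - 1) / (d + 1) * (N / (N + 2)) *
        (1 / (d * (1 / (N + 1) + N / (d * (N + 1))))) <
      ((N : ℝ) + 2) / (N + 1 + d) - 2 / (d + 1) := by
  have hn : (1:ℝ) ≤ N := by exact_mod_cast hN
  have hD : (2:ℝ) ≤ d := by exact_mod_cast hd
  have h1 : (0:ℝ) < d + 1 := by linarith
  have h2 : (0:ℝ) < N + 2 := by linarith
  have h3 : (0:ℝ) < N + 1 := by linarith
  have h4 : (0:ℝ) < N + 1 + d := by linarith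
  have h5 : (0:ℝ) < d := by linarith
  have h6 : (0:ℝ) < (d:ℝ) + N := by linarith
  have h7 : (0:ℝ) < (1:ℝ) / (N + 1) + N / (d * (N + 1)) := by positivity
  rw [div_add_div _ _ (ne_of_gt h3) (by positivity : (d:ℝ) * (N+1) ≠ 0)]
  field_simp
  have hP : (0:ℝ) < ((d:ℝ)-1) * N * (N+1) * d * (d+1) := by
    have : (0:ℝ) < (d:ℝ) - 1 := by linarith
    positivity
  have key : ((N:ℝ)+1) * (N+1+d) < (N+2) * (d+N) := by nlinarith
  nlinarith [mul_lt_mul_of_pos_left key hP, mul_lt_mul_of_pos_left key (mul_pos (by linarith : (0:ℝ) < (d:ℝ)-1) (by linarith : (0:ℝ) < (N:ℝ)))]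
end

section
/- Let X_N ~ Binomial(N, 1/d), q = ⌈(N+1)/d⌉, and ε_C(N) = Σ_{x=q}^{N} P(X_N = x)·(x+1−q)/(x+1). Then ε_C(N) → 0 as N → ∞ (with d fixed). -/
open Finset Filter

/-- The binomial probability `P(X_N = x)` for `X_N ~ Binomial(N, 1/d)`. -/
noncomputable def binomPMF (N d x : ℕ) : ℝ :=
  (N.choose x : ℝ) * (1 / d) ^ x * (1 - 1 / d) ^ (N - x)

lemma binomPMF_eq_eval (N d x : ℕ) :
    binomPMF N d x = (bernsteinPolynomial ℝ N x).eval ((1 : ℝ) / d) := by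
  simp [binomPMF, bernsteinPolynomial]

lemma binomPMF_nonneg {N d x : ℕ} (hd : 2 ≤ d) : 0 ≤ binomPMF N d x := by
  have h1 : (1:ℝ) / d ≤ 1 := by
    rw [div_le_one (by exact_mod_cast (by omega : 0 < d) : (0:ℝ) < d)]
    exact_mod_cast Nat.one_le_of_lt hd
  have h0 : (0:ℝ) ≤ 1 / d := by positivity
  have h2 : (0:ℝ) ≤ 1 - 1 / d := by linarith
  have := Nat.choose_pos (n := N) (k := x)
  apply mul_nonneg (mul_nonneg (by positivity) (by positivity)) (pow_nonneg h2 _)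

lemma binomPMF_sum (N d : ℕ) : ∑ x ∈ range (N + 1), binomPMF N d x = 1 := by
  have := congrArg (Polynomial.eval ((1:ℝ) / d)) (bernsteinPolynomial.sum ℝ N)
  simpa [Polynomial.eval_finset_sum, binomPMF_eq_eval] using this

lemma binomPMF_variance (N d : ℕ) :
    ∑ x ∈ range (N + 1), ((N : ℝ) * (1 / d) - x) ^ 2 * binomPMF N d x
      = (N : ℝ) * (1 / d) * (1 - 1 / d) := by
  have := congrArg (Polynomial.eval ((1:ℝ) / d)) (bernsteinPolynomial.variance ℝ N)
  simpa [Polynomial.eval_finset_sum, binomPMF_eq_eval, nsmul_eq_mul] using this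

lemma binomPMF_abs_moment {N d : ℕ} (hd : 2 ≤ d) :
    ∑ x ∈ range (N + 1), binomPMF N d x * |(x : ℝ) - N * (1 / d)| ≤ Real.sqrt N := by
  have hdR : (0:ℝ) < d := by exact_mod_cast (by omega : 0 < d)
  set p : ℝ := 1 / d with hp
  have hp1 : p ≤ 1 := by
    rw [hp, div_le_one hdR]; exact_mod_cast Nat.one_le_of_lt hd
  have hp0 : 0 ≤ p := by positivity
  set A := ∑ x ∈ range (N + 1), binomPMF N d x * |(x : ℝ) - N * p| with hA
  have hAnn : 0 ≤ A :=
    Finset.sum_nonneg fun x _ => mul_nonneg (binomPMF_nonneg hd) (abs_nonneg _)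
  have hsq : A ^ 2 ≤ (N : ℝ) := by
    have hcs := Finset.sum_mul_sq_le_sq_mul_sq (range (N + 1))
      (fun x => Real.sqrt (binomPMF N d x))
      (fun x => Real.sqrt (binomPMF N d x) * |(x : ℝ) - N * p|)
    have e1 : ∀ x ∈ range (N + 1),
        Real.sqrt (binomPMF N d x) * (Real.sqrt (binomPMF N d x) * |(x : ℝ) - N * p|)
          = binomPMF N d x * |(x : ℝ) - N * p| := by
      intro x _
      rw [← mul_assoc, Real.mul_self_sqrt (binomPMF_nonneg hd)]
    have e2 : ∀ x ∈ range (N + 1),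
        Real.sqrt (binomPMF N d x) ^ 2 = binomPMF N d x := fun x _ =>
      Real.sq_sqrt (binomPMF_nonneg hd)
    have e3 : ∀ x ∈ range (N + 1),
        (Real.sqrt (binomPMF N d x) * |(x : ℝ) - N * p|) ^ 2
          = ((N : ℝ) * p - x) ^ 2 * binomPMF N d x := by
      intro x _
      rw [mul_pow, sq_abs, Real.sq_sqrt (binomPMF_nonneg hd)]
      ring
    rw [Finset.sum_congr rfl e1, Finset.sum_congr rfl e2, Finset.sum_congr rfl e3,
      binomPMF_sum, binomPMF_variance, one_mul] at hcs
    calc A ^ 2 ≤ (N : ℝ) * p * (1 - p) := hcs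
      _ ≤ (N : ℝ) * 1 * 1 := by
          apply mul_le_mul (mul_le_mul le_rfl hp1 hp0 (Nat.cast_nonneg N)) (by linarith)
            (by linarith) (by positivity)
      _ = (N : ℝ) := by ring
  calc A = Real.sqrt (A ^ 2) := by rw [Real.sqrt_sq hAnn]
    _ ≤ Real.sqrt N := Real.sqrt_le_sqrt hsq

/-- With `q = ⌈(N+1)/d⌉` and
`ε_C(N) = Σ_{x=q}^{N} P(X_N = x)·(x+1−q)/(x+1)`, completeness failure tends to zero:
`ε_C(N) → 0` as `N → ∞` for fixed `d ≥ 2`. -/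
theorem completeness_tendsto_zero (d : ℕ) (hd : 2 ≤ d) :
    Tendsto
      (fun N : ℕ =>
        ∑ x ∈ Icc ((N + d) / d) N,
          binomPMF N d x * (((x : ℝ) + 1 - ((N + d) / d : ℕ)) / (x + 1)))
      atTop (nhds 0) := by
  have hd0 : 0 < d := by omega
  have hdR : (0:ℝ) < d := by exact_mod_cast hd0
  set p : ℝ := 1 / d with hp
  have hp0 : 0 ≤ p := by positivity
  set S : ℕ → ℝ := fun N =>
    ∑ x ∈ Icc ((N + d) / d) N,
      binomPMF N d x * (((x : ℝ) + 1 - ((N + d) / d : ℕ)) / (x + 1)) with hS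
  have hq_pos : ∀ N : ℕ, 1 ≤ (N + d) / d := fun N => (Nat.one_le_div_iff hd0).mpr (by omega)
  have hq_ge : ∀ N : ℕ, (N : ℝ) * p ≤ ((N + d) / d : ℕ) := by
    intro N
    have h1 : N < d * ((N + d) / d) := by
      have h2 := Nat.div_add_mod (N + d) d
      have h3 := Nat.mod_lt (N + d) hd0
      omega
    have h1R : (N : ℝ) < (d : ℝ) * (((N + d) / d : ℕ) : ℝ) := by exact_mod_cast h1
    rw [hp, mul_one_div, div_le_iff₀ hdR]
    linarith
  -- nonnegativity of S
  have hS_nonneg : ∀ N : ℕ, 0 ≤ S N := by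
    intro N
    apply Finset.sum_nonneg
    intro x hx
    rw [Finset.mem_Icc] at hx
    have hx1 : ((((N + d) / d : ℕ)) : ℝ) ≤ (x : ℝ) := by exact_mod_cast hx.1
    exact mul_nonneg (binomPMF_nonneg hd) (div_nonneg (by linarith) (by positivity))
  -- upper bound for N ≥ 1
  have hS_le : ∀ N : ℕ, 1 ≤ N → S N ≤ (Real.sqrt N + 1) * d / N := by
    intro N hN
    have hNR : (0:ℝ) < N := by exact_mod_cast hN
    set q : ℕ := (N + d) / d with hq
    have hqR : (0:ℝ) < q := by exact_mod_cast hq_pos N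
    have step1 : S N ≤ ∑ x ∈ range (N + 1),
        binomPMF N d x * ((|(x : ℝ) - N * p| + 1) / q) := by
      have hsub : Icc q N ⊆ range (N + 1) := by
        intro x hx; rw [Finset.mem_Icc] at hx; rw [Finset.mem_range]; omega
      refine le_trans (Finset.sum_le_sum ?_) (Finset.sum_le_sum_of_subset_of_nonneg hsub ?_)
      · intro x hx
        rw [Finset.mem_Icc] at hx
        have hxq : (q : ℝ) ≤ (x : ℝ) := by exact_mod_cast hx.1
        apply mul_le_mul_of_nonneg_left _ (binomPMF_nonneg hd)
        apply div_le_div₀ (by positivity)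
        · have h5 : (x : ℝ) - N * p ≤ |(x : ℝ) - N * p| := le_abs_self _
          have h6 := hq_ge N
          linarith
        · exact hqR
        · linarith
      · intro x _ _
        exact mul_nonneg (binomPMF_nonneg hd) (by positivity)
    have step2 : ∑ x ∈ range (N + 1),
        binomPMF N d x * ((|(x : ℝ) - N * p| + 1) / q) ≤ (Real.sqrt N + 1) / q := by
      have expand : ∑ x ∈ range (N + 1),
          binomPMF N d x * ((|(x : ℝ) - N * p| + 1) / q)
            = ((∑ x ∈ range (N + 1), binomPMF N d x * |(x : ℝ) - N * p|)
              + ∑ x ∈ range (N + 1), binomPMF N d x) / q := by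
        rw [← Finset.sum_add_distrib, Finset.sum_div]
        apply Finset.sum_congr rfl
        intro x _
        field_simp
      rw [expand, binomPMF_sum]
      gcongr
      exact binomPMF_abs_moment hd
    have step3 : (Real.sqrt N + 1) / (q : ℝ) ≤ (Real.sqrt N + 1) * d / N := by
      have h7 : (N : ℝ) / d ≤ (q : ℝ) := by
        have := hq_ge N
        rw [hp, mul_one_div] at this
        exact this
      have h8 : (0:ℝ) < (N : ℝ) / d := by positivity
      calc (Real.sqrt N + 1) / (q : ℝ) ≤ (Real.sqrt N + 1) / ((N : ℝ) / d) :=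
            div_le_div₀ (by positivity) le_rfl h8 h7
        _ = (Real.sqrt N + 1) * d / N := by
            rw [div_div_eq_mul_div]
    exact le_trans step1 (le_trans step2 step3)
  -- the dominating sequence tends to zero
  have hsqrt_atTop : Tendsto (fun N : ℕ => Real.sqrt N) atTop atTop := by
    rw [tendsto_atTop_atTop]
    intro b
    refine ⟨⌈b ^ 2⌉₊, fun i hi => ?_⟩
    have h9 : b ^ 2 ≤ (i : ℝ) := le_trans (Nat.le_ceil _) (by exact_mod_cast hi)
    calc b ≤ |b| := le_abs_self b
      _ = Real.sqrt (b ^ 2) := (Real.sqrt_sq_eq_abs b).symm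
      _ ≤ Real.sqrt i := Real.sqrt_le_sqrt h9
  have hg : Tendsto (fun N : ℕ => (d : ℝ) / Real.sqrt N + (d : ℝ) / N) atTop (nhds 0) := by
    have h10 : Tendsto (fun N : ℕ => (d : ℝ) / Real.sqrt N) atTop (nhds 0) :=
      Tendsto.div_atTop tendsto_const_nhds hsqrt_atTop
    have h11 : Tendsto (fun N : ℕ => (d : ℝ) / (N : ℝ)) atTop (nhds 0) :=
      Tendsto.div_atTop tendsto_const_nhds tendsto_natCast_atTop_atTop
    simpa using h10.add h11
  apply squeeze_zero' (Eventually.of_forall hS_nonneg) ?_ hg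
  filter_upwards [eventually_ge_atTop 1] with N hN
  have hNR : (0:ℝ) < N := by exact_mod_cast hN
  have hs : (0:ℝ) < Real.sqrt N := Real.sqrt_pos.mpr hNR
  have hss : Real.sqrt N * Real.sqrt N = (N : ℝ) := Real.mul_self_sqrt hNR.le
  have heq : (Real.sqrt N + 1) * d / N = (d : ℝ) / Real.sqrt N + (d : ℝ) / N := by
    field_simp
    linear_combination hss
  calc S N ≤ (Real.sqrt N + 1) * d / N := hS_le N hN
    _ = (d : ℝ) / Real.sqrt N + (d : ℝ) / N := heq
end

section
/- If for every bit position i and all pairs of indices r ≠ s the unveiling probabilities satisfy p_i(0|r) + p_i(1|s) ≤ 1 (binding commitments), and the unveiled bit values are determined by these per-bit distributions, then the distribution of unveiled commitment values is independent of the index told to Alice; consequently her success probability in matching a uniformly random index with one of q commitments is at most q/(N+1). -/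
open Finset

/-- Binding commitments force index-independent unveilings, hence success probability
at most `q/(N+1)`.  Here `p j i b r` is the probability that Alice successfully unveils
bit value `b` for bit `i` of commitment `j` when told index `r`; the binding condition
is `p j i 0 r + p j i 1 s ≤ 1` for all `r, s`, and "unveiled bit values determined by
the per-bit distributions" is expressed by `p j i 0 r + p j i 1 r = 1`.  Then the
unveiling distributions are independent of the told index, and consequently for any
index-independent unveiling distributions `g j r` (probability that commitment `j`
unveils to the value `r`), the success probability of matching a uniformly random
index with one of the `q` commitments is at most `q/(N+1)`. -/
theorem binding_implies_index_independence_and_soundness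
    (N q B : ℕ)
    (p : Fin q → Fin B → Bool → Fin (N + 1) → ℝ)
    (hnonneg : ∀ j i b r, 0 ≤ p j i b r)
    (hdet : ∀ j i r, p j i false r + p j i true r = 1)
    (hbind : ∀ j i r s, p j i false r + p j i true s ≤ 1) :
    (∀ j i b r s, p j i b r = p j i b s) ∧
      (∀ g : Fin q → Fin (N + 1) → ℝ,
        (∀ j r, 0 ≤ g j r) → (∀ j, ∑ r, g j r ≤ 1) →
        ∑ r, (1 / ((N : ℝ) + 1)) * min 1 (∑ j, g j r) ≤ q / ((N : ℝ) + 1)) := by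
  constructor
  · have htrue : ∀ j i r s, p j i true r = p j i true s := by
      intro j i r s
      have h1 : p j i true s ≤ p j i true r := by
        have := hbind j i r s; have := hdet j i r; linarith
      have h2 : p j i true r ≤ p j i true s := by
        have := hbind j i s r; have := hdet j i s; linarith
      linarith
    intro j i b r s
    cases b with
    | true => exact htrue j i r s
    | false =>
      have := hdet j i r; have := hdet j i s; have := htrue j i r s; linarith
  · intro g hg0 hg1
    have h1 : ∑ r, (1 / ((N : ℝ) + 1)) * min 1 (∑ j, g j r)
        ≤ ∑ r, (1 / ((N : ℝ) + 1)) * ∑ j, g j r := by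
      apply Finset.sum_le_sum
      intro r _
      have hN : (0:ℝ) ≤ 1 / ((N : ℝ) + 1) := by positivity
      exact mul_le_mul_of_nonneg_left (min_le_right _ _) hN
    refine h1.trans ?_
    rw [← Finset.mul_sum, Finset.sum_comm]
    have h2 : ∑ j : Fin q, ∑ r, g j r ≤ (q : ℝ) := by
      calc ∑ j : Fin q, ∑ r, g j r ≤ ∑ _j : Fin q, (1:ℝ) :=
            Finset.sum_le_sum (fun j _ => hg1 j)
        _ = q := by simp
    rw [one_div, div_eq_mul_inv, mul_comm ((q:ℝ))]
    exact mul_le_mul_of_nonneg_left h2 (by positivity)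
end

section
/- Symmetric-subspace overlap identity: with w(a,b) = C(a+b−1, a), the trace Tr(Π_S (|φ⟩⟨φ|^{⊗N} ⊗ (I/d)^{⊗1}) Π_S) over (ℂ^d)^{⊗(N+1)}, where Π_S is the projector onto the symmetric subspace, equals w(N+1,d)/(d·w(N,d)). As a dimension-counting corollary: dim Sym^{N+1}(ℂ^d) / (d · dim Sym^N(ℂ^d)) = (d+N)/(d(N+1)). -/
open Finset

/-- `w a b = C(a+b−1, a)`, the dimension of the symmetric subspace `Sym^a(ℂ^b)`. -/
def w (a b : ℕ) : ℕ := Nat.choose (a + b - 1) a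

/-- The permutation matrix of `σ` acting on `(ℂ^d)^{⊗(N+1)}` in the product basis. -/
def permMatrix (N d : ℕ) (σ : Equiv.Perm (Fin (N + 1))) :
    Matrix (Fin (N + 1) → Fin d) (Fin (N + 1) → Fin d) ℂ :=
  fun i j => if (fun k => i (σ k)) = j then 1 else 0

/-- The orthogonal projector `Π_S` onto the symmetric subspace of `(ℂ^d)^{⊗(N+1)}`. -/
noncomputable def symProj (N d : ℕ) :
    Matrix (Fin (N + 1) → Fin d) (Fin (N + 1) → Fin d) ℂ :=
  (((N + 1).factorial : ℂ))⁻¹ • ∑ σ : Equiv.Perm (Fin (N + 1)), permMatrix N d σ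

/-- The matrix of `|φ⟩⟨φ|^{⊗N} ⊗ (I/d)` on `(ℂ^d)^{⊗(N+1)}` in the product basis. -/
noncomputable def stateMatrix (N d : ℕ) (φ : Fin d → ℂ) :
    Matrix (Fin (N + 1) → Fin d) (Fin (N + 1) → Fin d) ℂ :=
  fun i j =>
    (∏ k : Fin N, φ (i k.castSucc) * (starRingEnd ℂ) (φ (j k.castSucc))) *
      (if i (Fin.last N) = j (Fin.last N) then (1 : ℂ) / d else 0)

/- ---------- auxiliary lemmas ---------- -/

lemma permMatrix_mul (N d : ℕ) (σ : Equiv.Perm (Fin (N + 1)))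
    (M : Matrix (Fin (N + 1) → Fin d) (Fin (N + 1) → Fin d) ℂ) :
    permMatrix N d σ * M = fun i j => M (fun k => i (σ k)) j := by
  funext i j
  simp only [Matrix.mul_apply, permMatrix, ite_mul, one_mul, zero_mul]
  rw [Finset.sum_ite_eq]
  simp

lemma permMatrix_mul_permMatrix (N d : ℕ) (σ τ : Equiv.Perm (Fin (N + 1))) :
    permMatrix N d σ * permMatrix N d τ = permMatrix N d (σ * τ) := by
  rw [permMatrix_mul]
  funext i j
  simp [permMatrix, Equiv.Perm.mul_apply]
  congr

lemma symProj_idem (N d : ℕ) : symProj N d * symProj N d = symProj N d := by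
  have hfac : ((N + 1).factorial : ℂ) ≠ 0 :=
    Nat.cast_ne_zero.mpr (N + 1).factorial_ne_zero
  have hA : (∑ σ : Equiv.Perm (Fin (N + 1)), permMatrix N d σ) *
      (∑ τ : Equiv.Perm (Fin (N + 1)), permMatrix N d τ) =
      (((N + 1).factorial : ℂ)) • ∑ σ : Equiv.Perm (Fin (N + 1)), permMatrix N d σ := by
    rw [Finset.sum_mul]
    have h1 : ∀ σ : Equiv.Perm (Fin (N + 1)),
        permMatrix N d σ * (∑ τ : Equiv.Perm (Fin (N + 1)), permMatrix N d τ) =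
        ∑ τ : Equiv.Perm (Fin (N + 1)), permMatrix N d τ := by
      intro σ
      rw [Finset.mul_sum]
      calc ∑ τ : Equiv.Perm (Fin (N + 1)), permMatrix N d σ * permMatrix N d τ
          = ∑ τ : Equiv.Perm (Fin (N + 1)), permMatrix N d (σ * τ) := by
            simp [permMatrix_mul_permMatrix]
        _ = ∑ τ : Equiv.Perm (Fin (N + 1)), permMatrix N d τ :=
            Fintype.sum_equiv (Equiv.mulLeft σ) _ _ (fun τ => rfl)
    simp only [h1, Finset.sum_const, Finset.card_univ, Fintype.card_perm, Fintype.card_fin]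
    rw [← Nat.cast_smul_eq_nsmul ℂ]
  unfold symProj
  rw [Matrix.smul_mul, Matrix.mul_smul, hA, smul_smul, smul_smul]
  congr 1
  field_simp

/-- Reindexing of the product over `Fin N` along `k ↦ σ k.castSucc`. -/
lemma prod_sigma_cast (N : ℕ) (σ : Equiv.Perm (Fin (N + 1))) (f : Fin (N + 1) → ℂ) :
    ∏ k : Fin N, f (σ k.castSucc) =
      ∏ j ∈ Finset.univ.erase (σ (Fin.last N)), f j := by
  have himg : (Finset.univ : Finset (Fin N)).image (fun k => σ k.castSucc) =
      Finset.univ.erase (σ (Fin.last N)) := by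
    ext a
    simp only [Finset.mem_image, Finset.mem_erase, Finset.mem_univ, and_true, true_and]
    constructor
    · rintro ⟨k, rfl⟩
      intro h
      exact (Fin.castSucc_lt_last k).ne (σ.injective h)
    · intro ha
      have h1 : σ.symm a ≠ Fin.last N := by
        intro h
        apply ha
        rw [← h, Equiv.apply_symm_apply]
      obtain ⟨k, hk⟩ := Fin.exists_castSucc_eq.mpr h1
      exact ⟨k, by rw [hk, Equiv.apply_symm_apply]⟩
  rw [← himg, Finset.prod_image]
  intro x _ y _ h
  exact Fin.castSucc_injective N (σ.injective h)

lemma prod_castSucc_eq (N : ℕ) (f : Fin (N + 1) → ℂ) :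
    ∏ k : Fin N, f k.castSucc = ∏ j ∈ Finset.univ.erase (Fin.last N), f j := by
  simpa using prod_sigma_cast N 1 f

/-- Case A: permutations fixing `last`. -/
lemma prodA (N : ℕ) (σ : Equiv.Perm (Fin (N + 1))) (hlast : σ (Fin.last N) = Fin.last N)
    (f : Fin (N + 1) → ℂ) :
    ∏ k : Fin N, f (σ k.castSucc) = ∏ k : Fin N, f k.castSucc := by
  rw [prod_sigma_cast, hlast, ← prod_castSucc_eq]

/-- Case B: permutations moving `last`. -/
lemma prodB (N : ℕ) (σ : Equiv.Perm (Fin (N + 1))) (hm : σ (Fin.last N) ≠ Fin.last N)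
    (f : Fin (N + 1) → ℂ) (hf : f (Fin.last N) = f (σ (Fin.last N))) :
    ∏ k : Fin N, f (σ k.castSucc) = ∏ k : Fin N, f k.castSucc := by
  set m := σ (Fin.last N) with hmdef
  rw [prod_sigma_cast, ← hmdef]
  rw [← Finset.mul_prod_erase (Finset.univ.erase m) f
    (Finset.mem_erase.mpr ⟨Ne.symm hm, Finset.mem_univ _⟩)]
  rw [Finset.erase_right_comm, hf, Finset.mul_prod_erase (Finset.univ.erase (Fin.last N)) f
    (Finset.mem_erase.mpr ⟨hm, Finset.mem_univ _⟩)]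
  rw [← prod_castSucc_eq]

/-- The key per-permutation computation. -/
lemma key_sum (N d : ℕ) (hd : 1 ≤ d) (φ : Fin d → ℂ)
    (hsum : ∑ a : Fin d, φ a * (starRingEnd ℂ) (φ a) = 1)
    (σ : Equiv.Perm (Fin (N + 1))) :
    ∑ i : Fin (N + 1) → Fin d, stateMatrix N d φ (fun k => i (σ k)) i =
      if σ (Fin.last N) = Fin.last N then 1 else (1 : ℂ) / d := by
  have hd0 : (d : ℂ) ≠ 0 := Nat.cast_ne_zero.mpr (by omega)
  have hprod : ∑ g : Fin N → Fin d,
      ∏ k : Fin N, (φ (g k) * (starRingEnd ℂ) (φ (g k))) = 1 := by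
    have h := Finset.prod_univ_sum (fun _ : Fin N => (Finset.univ : Finset (Fin d)))
      (fun _ a => φ a * (starRingEnd ℂ) (φ a))
    rw [Fintype.piFinset_univ] at h
    rw [← h]
    simp [hsum]
  by_cases hlast : σ (Fin.last N) = Fin.last N
  · rw [if_pos hlast]
    have hstep : ∀ i : Fin (N + 1) → Fin d,
        stateMatrix N d φ (fun k => i (σ k)) i =
          (∏ k : Fin N, (φ (i k.castSucc) * (starRingEnd ℂ) (φ (i k.castSucc)))) * (1 / d) := by
      intro i
      show (∏ k : Fin N, φ (i (σ k.castSucc)) * (starRingEnd ℂ) (φ (i k.castSucc))) *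
          (if i (σ (Fin.last N)) = i (Fin.last N) then (1 : ℂ) / d else 0) = _
      rw [hlast, if_pos rfl]
      congr 1
      rw [Finset.prod_mul_distrib, Finset.prod_mul_distrib]
      congr 1
      have h := prodA N σ hlast (fun j => φ (i j))
      simpa using h
    simp only [hstep]
    rw [← Finset.sum_mul]
    have e1 : (∑ i : Fin (N + 1) → Fin d,
        ∏ k : Fin N, (φ (i k.castSucc) * (starRingEnd ℂ) (φ (i k.castSucc)))) =
        ∑ p : Fin d × (Fin N → Fin d),
          ∏ k : Fin N, (φ (p.2 k) * (starRingEnd ℂ) (φ (p.2 k))) := by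
      refine (Fintype.sum_equiv (Fin.snocEquiv (fun _ => Fin d)) _ _ fun p => ?_).symm
      refine Finset.prod_congr rfl fun k _ => ?_
      have hsc : (Fin.snocEquiv (fun _ => Fin d) p) k.castSucc = p.2 k :=
        Fin.snoc_castSucc (α := fun _ => Fin d) p.1 p.2 k
      rw [hsc]
    rw [e1, Fintype.sum_prod_type, Finset.sum_congr rfl (fun x _ => hprod)]
    simp only [Finset.sum_const, Finset.card_univ, Fintype.card_fin, nsmul_eq_mul, mul_one]
    field_simp
  · rw [if_neg hlast]
    set m' : Fin N := (σ (Fin.last N)).castPred hlast with hm'def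
    have hm'cast : m'.castSucc = σ (Fin.last N) := Fin.castSucc_castPred _ hlast
    have e1 : (∑ i : Fin (N + 1) → Fin d, stateMatrix N d φ (fun k => i (σ k)) i) =
        ∑ p : Fin d × (Fin N → Fin d),
          stateMatrix N d φ (fun k => (Fin.snoc p.2 p.1 : Fin (N + 1) → Fin d) (σ k))
            (Fin.snoc p.2 p.1) := by
      exact (Fintype.sum_equiv (Fin.snocEquiv (fun _ => Fin d)) _ _ fun p => rfl).symm
    rw [e1, Fintype.sum_prod_type, Finset.sum_comm]
    have hinner : ∀ g : Fin N → Fin d,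
        (∑ x : Fin d, stateMatrix N d φ
          (fun k => (Fin.snoc g x : Fin (N + 1) → Fin d) (σ k)) (Fin.snoc g x)) =
        (∏ k : Fin N, (φ (g k) * (starRingEnd ℂ) (φ (g k)))) * (1 / d) := by
      intro g
      have hmem : ∀ x : Fin d,
          (Fin.snoc g x : Fin (N + 1) → Fin d) (σ (Fin.last N)) = g m' := by
        intro x
        conv_lhs => rw [← hm'cast]
        rw [Fin.snoc_castSucc]
      have hcond : ∀ x : Fin d, stateMatrix N d φ
          (fun k => (Fin.snoc g x : Fin (N + 1) → Fin d) (σ k)) (Fin.snoc g x) =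
          if g m' = x then stateMatrix N d φ
            (fun k => (Fin.snoc g x : Fin (N + 1) → Fin d) (σ k)) (Fin.snoc g x) else 0 := by
        intro x
        by_cases h : g m' = x
        · rw [if_pos h]
        · rw [if_neg h]
          show (∏ k : Fin N, φ ((Fin.snoc g x : Fin (N + 1) → Fin d) (σ k.castSucc)) *
              (starRingEnd ℂ) (φ ((Fin.snoc g x : Fin (N + 1) → Fin d) k.castSucc))) *
            (if (Fin.snoc g x : Fin (N + 1) → Fin d) (σ (Fin.last N)) =
              (Fin.snoc g x : Fin (N + 1) → Fin d) (Fin.last N) then (1 : ℂ) / d else 0) = 0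
          rw [hmem, Fin.snoc_last, if_neg h, mul_zero]
      rw [Finset.sum_congr rfl (fun x _ => hcond x), Finset.sum_ite_eq,
        if_pos (Finset.mem_univ _)]
      set i : Fin (N + 1) → Fin d := Fin.snoc g (g m') with hi
      show (∏ k : Fin N, φ (i (σ k.castSucc)) * (starRingEnd ℂ) (φ (i k.castSucc))) *
          (if i (σ (Fin.last N)) = i (Fin.last N) then (1 : ℂ) / d else 0) = _
      have hδ : i (σ (Fin.last N)) = i (Fin.last N) := by
        rw [hi, hmem, Fin.snoc_last]
      rw [if_pos hδ]
      congr 1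
      rw [Finset.prod_mul_distrib, Finset.prod_mul_distrib]
      have hB := prodB N σ hlast (fun j => φ (i j)) (by
        show φ (i (Fin.last N)) = φ (i (σ (Fin.last N)))
        rw [hδ])
      rw [hB]
      have hic : ∀ k : Fin N, i k.castSucc = g k := fun k => Fin.snoc_castSucc _ _ _
      simp only [hic]
    rw [Finset.sum_congr rfl (fun g _ => hinner g), ← Finset.sum_mul, hprod, one_mul]

/-- Symmetric-subspace overlap identity:
`Tr(Π_S (|φ⟩⟨φ|^{⊗N} ⊗ I/d) Π_S) = w(N+1,d)/(d·w(N,d))` for any unit vector `φ`,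
together with the dimension-counting corollary
`dim Sym^{N+1}(ℂ^d) / (d · dim Sym^N(ℂ^d)) = (d+N)/(d(N+1))`. -/
theorem symmetric_subspace_overlap
    (N d : ℕ) (hd : 1 ≤ d) (φ : Fin d → ℂ) (hφ : ∑ a, ‖φ a‖ ^ 2 = 1) :
    (symProj N d * stateMatrix N d φ * symProj N d).trace =
        (w (N + 1) d : ℂ) / (d * w N d) ∧
      (w (N + 1) d : ℚ) / (d * w N d) = ((d : ℚ) + N) / (d * (N + 1)) := by
  have hd0 : (d : ℚ) ≠ 0 := Nat.cast_ne_zero.mpr (by omega)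
  have hdc0 : (d : ℂ) ≠ 0 := Nat.cast_ne_zero.mpr (by omega)
  have hkey : (N + d) * w N d = w (N + 1) d * (N + 1) := by
    have h1 : N + d - 1 + 1 = N + d := by omega
    have h := Nat.add_one_mul_choose_eq (N + d - 1) N
    unfold w
    rw [h1] at h
    have h2 : N + 1 + d - 1 = N + d := by omega
    rw [h2]
    simpa using h
  have hw0 : w N d ≠ 0 := by
    unfold w
    exact (Nat.choose_pos (by omega)).ne'
  have hN1Q : ((N : ℚ) + 1) ≠ 0 := by positivity
  constructor
  · have hsum : ∑ a : Fin d, φ a * (starRingEnd ℂ) (φ a) = 1 := by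
      have h := congrArg (fun x : ℝ => (x : ℂ)) hφ
      push_cast at h
      rw [← h]
      refine Finset.sum_congr rfl fun a _ => ?_
      rw [Complex.mul_conj, Complex.normSq_eq_norm_sq]
      push_cast
      ring
    have h1 : (symProj N d * stateMatrix N d φ * symProj N d).trace =
        (symProj N d * stateMatrix N d φ).trace := by
      rw [Matrix.trace_mul_comm, ← Matrix.mul_assoc, symProj_idem]
    rw [h1]
    unfold symProj
    rw [Matrix.smul_mul, Matrix.trace_smul, Finset.sum_mul, Matrix.trace_sum]
    have h2 : ∀ σ : Equiv.Perm (Fin (N + 1)),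
        (permMatrix N d σ * stateMatrix N d φ).trace =
          if σ (Fin.last N) = Fin.last N then 1 else (1 : ℂ) / d := by
      intro σ
      rw [permMatrix_mul, ← key_sum N d hd φ hsum σ]
      rfl
    simp only [h2]
    have h3 : (∑ σ : Equiv.Perm (Fin (N + 1)),
        if σ (Fin.last N) = Fin.last N then (1 : ℂ) else 1 / d) =
        (N.factorial : ℂ) * (1 + N * (1 / d)) := by
      calc
        (∑ σ : Equiv.Perm (Fin (N + 1)),
            if σ (Fin.last N) = Fin.last N then (1 : ℂ) else 1 / d)
            = ∑ τ : Equiv.Perm (Fin (N + 1)),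
                (if (τ 0).rev = Fin.last N then (1 : ℂ) else 1 / d) := by
              refine (Fintype.sum_equiv
                ((Equiv.mulLeft (Fin.revPerm : Equiv.Perm (Fin (N + 1)))).trans
                  (Equiv.mulRight (Fin.revPerm : Equiv.Perm (Fin (N + 1))))) _ _
                fun τ => ?_).symm
              have hτ : (((Equiv.mulLeft (Fin.revPerm : Equiv.Perm (Fin (N + 1)))).trans
                  (Equiv.mulRight (Fin.revPerm : Equiv.Perm (Fin (N + 1))))) τ)
                  (Fin.last N) = (τ 0).rev := by
                simp [Equiv.Perm.mul_apply]
              rw [hτ]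
        _ = ∑ p : Fin (N + 1) × Equiv.Perm (Fin N),
              (if p.1.rev = Fin.last N then (1 : ℂ) else 1 / d) := by
              refine (Fintype.sum_equiv Equiv.Perm.decomposeFin.symm _ _ fun p => ?_).symm
              obtain ⟨x, π⟩ := p
              rw [Equiv.Perm.decomposeFin_symm_apply_zero]
        _ = (N.factorial : ℂ) *
              ∑ x : Fin (N + 1), (if x.rev = Fin.last N then (1 : ℂ) else 1 / d) := by
              rw [Fintype.sum_prod_type, Finset.sum_comm]
              show (∑ _y : Equiv.Perm (Fin N), ∑ x : Fin (N + 1),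
                  if x.rev = Fin.last N then (1 : ℂ) else 1 / d) = _
              rw [Finset.sum_const, Finset.card_univ, Fintype.card_perm,
                Fintype.card_fin, nsmul_eq_mul]
        _ = (N.factorial : ℂ) * (1 + N * (1 / d)) := by
              congr 1
              rw [Fintype.sum_equiv Fin.revPerm
                (fun x : Fin (N + 1) => if x.rev = Fin.last N then (1 : ℂ) else 1 / d)
                (fun x : Fin (N + 1) => if x = Fin.last N then (1 : ℂ) else 1 / d)
                (fun x => rfl)]
              rw [Fin.sum_univ_castSucc, if_pos rfl]
              rw [Finset.sum_congr rfl
                (fun (k : Fin N) _ => if_neg (Fin.castSucc_lt_last k).ne)]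
              simp only [Finset.sum_const, Finset.card_univ, Fintype.card_fin,
                nsmul_eq_mul]
              ring
    rw [h3]
    have hkeyC : ((N : ℂ) + d) * (w N d : ℂ) = (w (N + 1) d : ℂ) * ((N : ℂ) + 1) := by
      exact_mod_cast congrArg (fun n : ℕ => (n : ℂ)) hkey
    have hwc0 : (w N d : ℂ) ≠ 0 := Nat.cast_ne_zero.mpr hw0
    have hfac : ((N + 1).factorial : ℂ) = ((N : ℂ) + 1) * (N.factorial : ℂ) := by
      rw [Nat.factorial_succ]; push_cast; ring
    have hNfac : (N.factorial : ℂ) ≠ 0 := Nat.cast_ne_zero.mpr N.factorial_ne_zero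
    have hN1 : ((N : ℂ) + 1) ≠ 0 := by
      have h5 : ((N + 1 : ℕ) : ℂ) ≠ 0 := Nat.cast_ne_zero.mpr (Nat.succ_ne_zero N)
      push_cast at h5
      exact h5
    rw [smul_eq_mul, hfac]
    have hdiv : (w (N + 1) d : ℂ) / (d * w N d) = ((N : ℂ) + d) / (d * ((N : ℂ) + 1)) := by
      rw [div_eq_div_iff (mul_ne_zero hdc0 hwc0) (mul_ne_zero hdc0 hN1)]
      linear_combination (-(d : ℂ)) * hkeyC
    rw [hdiv]
    field_simp
    ring
  · have hkeyQ : ((N : ℚ) + d) * (w N d : ℚ) = (w (N + 1) d : ℚ) * ((N : ℚ) + 1) := by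
      exact_mod_cast congrArg (fun n : ℕ => (n : ℚ)) hkey
    have hwq0 : (w N d : ℚ) ≠ 0 := Nat.cast_ne_zero.mpr hw0
    field_simp
    linear_combination (-1 : ℚ) * hkeyQ
end
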